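/- Let (G, P_f) be a faithful Bayes network with root node 𝔱, and let f be a child of 𝔱. Then there exists a measurable set W of time values with P_G(T ∈ W) > 0 such that in ANY Bayes network (G_W, P_{W,g}) over the features 𝔉 representing P_G(X ∈ · | T ∈ W) and agreeing with (G, P_g) in structure for nodes other than children of 𝔱, the kernel at f must differ: P_{W,f} ≠ P_f. -/
import Mathlib


open scoped ENNReal BigOperators

/-- Marginal mass of the event `{y : ∀ v ∈ Z, y v = x v}` under the joint mass `P`. -/
noncomputable def Mg {V : Type*} [Fintype V] [DecidableEq V] {S : V → Type*}
    [∀ v, Fintype (S v)] [∀ v, DecidableEq (S v)]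
    (P : (∀ v, S v) → ℝ≥0∞) (Z : Finset V) (x : ∀ v, S v) : ℝ≥0∞ :=
  ∑ y : ∀ v, S v, if ∀ v ∈ Z, y v = x v then P y else 0

/-- Conditional independence `X_A ⫫ X_B | X_Z` for the joint mass `P`. -/
def CondIndepSets {V : Type*} [Fintype V] [DecidableEq V] {S : V → Type*}
    [∀ v, Fintype (S v)] [∀ v, DecidableEq (S v)]
    (P : (∀ v, S v) → ℝ≥0∞) (A B Z : Finset V) : Prop :=
  ∀ x : ∀ v, S v, Mg P (A ∪ B ∪ Z) x * Mg P Z x = Mg P (A ∪ Z) x * Mg P (B ∪ Z) x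

/-- Collider/non-collider blocking of a walk, as in d-separation. -/
def IsBlocked {V : Type*} (E : V → V → Prop) (Z : Set V) (n : ℕ) (p : ℕ → V) : Prop :=
  ∃ i : ℕ, 0 < i ∧ i < n ∧
    (((E (p (i - 1)) (p i) ∧ E (p (i + 1)) (p i)) ∧
        ∀ w, Relation.ReflTransGen E (p i) w → w ∉ Z) ∨
      (¬(E (p (i - 1)) (p i) ∧ E (p (i + 1)) (p i)) ∧ p i ∈ Z))

/-- `Z` d-separates `a` from `b` in the directed graph `E`. -/
def DSep {V : Type*} (E : V → V → Prop) (Z : Set V) (a b : V) : Prop :=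
  ∀ (n : ℕ) (p : ℕ → V), 0 < n → p 0 = a → p n = b →
    (∀ i ≤ n, ∀ j ≤ n, p i = p j → i = j) →
    (∀ i < n, E (p i) (p (i + 1)) ∨ E (p (i + 1)) (p i)) →
    IsBlocked E Z n p

section Aux

variable {V : Type*} [Fintype V] [DecidableEq V] {S : V → Type*}
    [∀ v, Fintype (S v)] [∀ v, DecidableEq (S v)]

lemma update_piSplitAt (m : V) (a b : S m) (z : ∀ v : { v // v ≠ m }, S v.1) :
    Function.update ((Equiv.piSplitAt m S).symm (a, z)) m b = (Equiv.piSplitAt m S).symm (b, z) := by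
  funext v
  rcases eq_or_ne v m with rfl | hv
  · simp [Equiv.piSplitAt_symm_apply]
  · simp [Equiv.piSplitAt_symm_apply, hv, Function.update_of_ne hv]

lemma sum_split (m : V) (f : (∀ v, S v) → ℝ≥0∞) :
    ∑ y : ∀ v, S v, f y =
      ∑ z : ∀ v : { v // v ≠ m }, S v.1, ∑ a : S m, f ((Equiv.piSplitAt m S).symm (a, z)) := by
  rw [← Equiv.sum_comp (Equiv.piSplitAt m S).symm f, Fintype.sum_prod_type, Finset.sum_comm]

/-- key single-coordinate "sum out" step. -/
lemma step_lemma (m : V) (x : ∀ v, S v) (U : Finset V) (hm : m ∉ U)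
    (F κ : (∀ v, S v) → ℝ≥0∞)
    (hF : ∀ (y : ∀ v, S v) (a : S m), F (Function.update y m a) = F y)
    (hκ : ∀ y : ∀ v, S v, ∑ a : S m, κ (Function.update y m a) = 1) :
    (∑ y : ∀ v, S v, if ∀ v ∈ U, y v = x v then κ y * F y else 0)
      = ∑ y : ∀ v, S v, if ∀ v ∈ insert m U, y v = x v then F y else 0 := by
  rw [sum_split m, sum_split m]
  refine Finset.sum_congr rfl fun z _ => ?_
  have hupd : ∀ a : S m, (Equiv.piSplitAt m S).symm (a, z)
      = Function.update ((Equiv.piSplitAt m S).symm (x m, z)) m a :=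
    fun a => (update_piSplitAt m (x m) a z).symm
  have hcoordm : ∀ a : S m, (Equiv.piSplitAt m S).symm (a, z) m = a := by
    intro a; simp [Equiv.piSplitAt_symm_apply]
  have hcoord : ∀ (a : S m) (v : V), v ≠ m →
      (Equiv.piSplitAt m S).symm (a, z) v = (Equiv.piSplitAt m S).symm (x m, z) v := by
    intro a v hv; rw [hupd a, Function.update_of_ne hv]
  have hcond : ∀ a : S m,
      (∀ v ∈ U, (Equiv.piSplitAt m S).symm (a, z) v = x v)
        ↔ (∀ v ∈ U, (Equiv.piSplitAt m S).symm (x m, z) v = x v) := by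
    intro a
    constructor <;> intro h v hv <;>
      [rw [← hcoord a v (fun hvm => hm (hvm ▸ hv))]; rw [hcoord a v (fun hvm => hm (hvm ▸ hv))]] <;>
      exact h v hv
  have hFconst : ∀ a : S m,
      F ((Equiv.piSplitAt m S).symm (a, z)) = F ((Equiv.piSplitAt m S).symm (x m, z)) := by
    intro a; rw [hupd a, hF]
  by_cases hc : ∀ v ∈ U, (Equiv.piSplitAt m S).symm (x m, z) v = x v
  · have hL : ∀ a : S m,
        (if ∀ v ∈ U, (Equiv.piSplitAt m S).symm (a, z) v = x v then
            κ ((Equiv.piSplitAt m S).symm (a, z)) * F ((Equiv.piSplitAt m S).symm (a, z)) else 0)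
          = κ ((Equiv.piSplitAt m S).symm (a, z)) * F ((Equiv.piSplitAt m S).symm (x m, z)) := by
      intro a; rw [if_pos ((hcond a).mpr hc), hFconst a]
    have hR : ∀ a : S m,
        (if ∀ v ∈ insert m U, (Equiv.piSplitAt m S).symm (a, z) v = x v then
            F ((Equiv.piSplitAt m S).symm (a, z)) else 0)
          = if a = x m then F ((Equiv.piSplitAt m S).symm (x m, z)) else 0 := by
      intro a
      rcases eq_or_ne a (x m) with rfl | ha
      · rw [if_pos, if_pos rfl]
        intro v hv
        rcases Finset.mem_insert.mp hv with rfl | hv'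
        · exact hcoordm _
        · exact hc v hv'
      · rw [if_neg, if_neg ha]
        intro hcon
        exact ha ((hcoordm a) ▸ hcon m (Finset.mem_insert_self m U))
    calc (∑ a : S m, if ∀ v ∈ U, (Equiv.piSplitAt m S).symm (a, z) v = x v then
            κ ((Equiv.piSplitAt m S).symm (a, z)) * F ((Equiv.piSplitAt m S).symm (a, z)) else 0)
        = ∑ a : S m, κ ((Equiv.piSplitAt m S).symm (a, z)) * F ((Equiv.piSplitAt m S).symm (x m, z)) := by
          exact Finset.sum_congr rfl fun a _ => hL a
      _ = (∑ a : S m, κ ((Equiv.piSplitAt m S).symm (a, z))) * F ((Equiv.piSplitAt m S).symm (x m, z)) := by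
          rw [Finset.sum_mul]
      _ = F ((Equiv.piSplitAt m S).symm (x m, z)) := by
          have : (∑ a : S m, κ ((Equiv.piSplitAt m S).symm (a, z))) = 1 := by
            have := hκ ((Equiv.piSplitAt m S).symm (x m, z))
            calc (∑ a : S m, κ ((Equiv.piSplitAt m S).symm (a, z)))
                = ∑ a : S m, κ (Function.update ((Equiv.piSplitAt m S).symm (x m, z)) m a) := by
                  exact Finset.sum_congr rfl fun a _ => by rw [hupd a]
              _ = 1 := this
          rw [this, one_mul]
      _ = ∑ a : S m, (if a = x m then F ((Equiv.piSplitAt m S).symm (x m, z)) else 0) := by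
          rw [Finset.sum_ite_eq' Finset.univ (x m)
            (fun _ => F ((Equiv.piSplitAt m S).symm (x m, z))), if_pos (Finset.mem_univ _)]
      _ = ∑ a : S m, if ∀ v ∈ insert m U, (Equiv.piSplitAt m S).symm (a, z) v = x v then
            F ((Equiv.piSplitAt m S).symm (a, z)) else 0 := by
          exact Finset.sum_congr rfl fun a _ => (hR a).symm
  · have hL : ∀ a : S m,
        (if ∀ v ∈ U, (Equiv.piSplitAt m S).symm (a, z) v = x v then
            κ ((Equiv.piSplitAt m S).symm (a, z)) * F ((Equiv.piSplitAt m S).symm (a, z)) else 0) = 0 := by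
      intro a; rw [if_neg (fun h => hc ((hcond a).mp h))]
    have hR : ∀ a : S m,
        (if ∀ v ∈ insert m U, (Equiv.piSplitAt m S).symm (a, z) v = x v then
            F ((Equiv.piSplitAt m S).symm (a, z)) else 0) = 0 := by
      intro a
      rw [if_neg]
      intro hcon
      exact hc ((hcond a).mp (fun v hv => hcon v (Finset.mem_insert_of_mem hv)))
    simp only [hL, hR]

/-- product of kernels outside `D`, restricted marginal. -/
noncomputable def MgK (k : ∀ _ : V, (∀ v, S v) → ℝ≥0∞) (D U : Finset V) (x : ∀ v, S v) : ℝ≥0∞ :=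
  ∑ y : ∀ v, S v, if ∀ v ∈ U, y v = x v then ∏ g ∈ Dᶜ, k g y else 0

lemma key_lemma (E : V → V → Prop) (hacyclic : ∀ v, ¬ Relation.TransGen E v v)
    (k : ∀ _ : V, (∀ v, S v) → ℝ≥0∞)
    (hloc : ∀ (f : V) (x y : ∀ v, S v),
      (∀ g, E g f → x g = y g) → x f = y f → k f x = k f y)
    (hnorm : ∀ (f : V) (x : ∀ v, S v), ∑ a : S f, k f (Function.update x f a) = 1)
    (D : Finset V) :
    (∀ v ∈ D, ∀ w, E v w → w ∈ D) → ∀ U : Finset V, Disjoint D U →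
      ∀ x, MgK k ∅ U x = MgK k D (U ∪ D) x := by
  classical
  induction D using Finset.strongInductionOn with
  | _ D IH =>
    intro hclosed U hdisj x
    rcases D.eq_empty_or_nonempty with rfl | hne
    · simp [MgK]
    · have hwf : WellFounded (fun a b : V => Relation.TransGen E a b) := by
        have h1 : IsIrrefl V (fun a b => Relation.TransGen E a b) := ⟨hacyclic⟩
        have h2 : IsTrans V (fun a b => Relation.TransGen E a b) :=
          ⟨fun _ _ _ => Relation.TransGen.trans⟩
        exact Finite.wellFounded_of_trans_of_irrefl _
      obtain ⟨s, hsD, hsmin⟩ := hwf.has_min (↑D) (Finset.coe_nonempty.mpr hne)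
      have hsD' : s ∈ D := hsD
      have hsource : ∀ g ∈ D, ¬ E g s := fun g hg hgs =>
        hsmin g hg (Relation.TransGen.single hgs)
      set D' := D.erase s with hD'
      have hD'sub : D' ⊂ D := Finset.erase_ssubset hsD'
      have hD'closed : ∀ v ∈ D', ∀ w, E v w → w ∈ D' := by
        intro v hv w hvw
        have hvD : v ∈ D := Finset.mem_of_mem_erase hv
        have hwD : w ∈ D := hclosed v hvD w hvw
        refine Finset.mem_erase.mpr ⟨?_, hwD⟩
        rintro rfl
        exact hsource v hvD hvw
      have hdisj' : Disjoint D' U := Finset.disjoint_of_subset_left (Finset.erase_subset s D) hdisj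
      rw [IH D' hD'sub hD'closed U hdisj' x]
      -- now step: MgK k D' (U ∪ D') x = MgK k D (U ∪ D) x
      have hprod : ∀ y : ∀ v, S v, (∏ g ∈ D'ᶜ, k g y) = k s y * ∏ g ∈ Dᶜ, k g y := by
        intro y
        rw [hD', Finset.compl_erase, Finset.prod_insert (by simp [hsD'])]
      have hFinv : ∀ (y : ∀ v, S v) (a : S s),
          (∏ g ∈ Dᶜ, k g (Function.update y s a)) = ∏ g ∈ Dᶜ, k g y := by
        intro y a
        refine Finset.prod_congr rfl fun g hg => ?_
        have hgD : g ∉ D := Finset.mem_compl.mp hg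
        refine hloc g _ _ (fun h hhg => ?_) ?_
        · have hhs : h ≠ s := fun hhs' => hgD (hclosed s hsD' g (hhs' ▸ hhg))
          rw [Function.update_of_ne hhs]
        · have hgs : g ≠ s := fun h => hgD (h ▸ hsD')
          rw [Function.update_of_ne hgs]
      have hsm : s ∉ U ∪ D' := by
        rw [Finset.mem_union]
        rintro (h | h)
        · exact (Finset.disjoint_left.mp hdisj hsD') h
        · exact (Finset.mem_erase.mp h).1 rfl
      have hins : insert s (U ∪ D') = U ∪ D := by
        ext v
        simp only [Finset.mem_insert, Finset.mem_union, Finset.mem_erase, hD']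
        constructor
        · rintro (rfl | h | ⟨_, h⟩)
          · exact Or.inr hsD'
          · exact Or.inl h
          · exact Or.inr h
        · rintro (h | h)
          · exact Or.inr (Or.inl h)
          · rcases eq_or_ne v s with rfl | hv
            · exact Or.inl rfl
            · exact Or.inr (Or.inr ⟨hv, h⟩)
      calc MgK k D' (U ∪ D') x
          = ∑ y : ∀ v, S v, if ∀ v ∈ U ∪ D', y v = x v then k s y * ∏ g ∈ Dᶜ, k g y else 0 := by
            unfold MgK
            exact Finset.sum_congr rfl fun y _ => by rw [hprod y]
        _ = ∑ y : ∀ v, S v, if ∀ v ∈ insert s (U ∪ D'), y v = x v then ∏ g ∈ Dᶜ, k g y else 0 :=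
            step_lemma s x (U ∪ D') hsm _ (k s) hFinv (hnorm s)
        _ = MgK k D (U ∪ D) x := by rw [hins]; rfl

lemma pull_const {U : Finset V} {x : ∀ v, S v} {c : ℝ≥0∞} {κ F : (∀ v, S v) → ℝ≥0∞}
    (h : ∀ y : ∀ v, S v, (∀ v ∈ U, y v = x v) → κ y = c) :
    (∑ y : ∀ v, S v, if ∀ v ∈ U, y v = x v then κ y * F y else 0)
      = c * ∑ y : ∀ v, S v, if ∀ v ∈ U, y v = x v then F y else 0 := by
  rw [Finset.mul_sum]
  refine Finset.sum_congr rfl fun y _ => ?_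
  split_ifs with hc
  · rw [h y hc]
  · rw [mul_zero]

end Aux

/-- (Minimality half of Theorem 4, discrete Bayes-network model.)
If `(G, k)` is faithful and `f` is a child of the root time node `𝔱`, then there is a
time window `W` of positive probability such that ANY Bayes network over the non-time
features that represents the conditional distribution `P_G(X ∈ · | T ∈ W)` and whose
kernels agree with the original ones on all nodes other than children of `𝔱` must
have a kernel at `f` different from `k f`. -/
theorem stmt_17 {V : Type*} [Fintype V] [DecidableEq V]
    {S : V → Type*} [∀ v, Fintype (S v)] [∀ v, DecidableEq (S v)]
    (E : V → V → Prop)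
    (hacyclic : ∀ v, ¬ Relation.TransGen E v v)
    (k : ∀ _ : V, (∀ v, S v) → ℝ≥0∞)
    (hloc : ∀ (f : V) (x y : ∀ v, S v),
      (∀ g, E g f → x g = y g) → x f = y f → k f x = k f y)
    (hnorm : ∀ (f : V) (x : ∀ v, S v), ∑ a : S f, k f (Function.update x f a) = 1)
    (P : (∀ v, S v) → ℝ≥0∞) (hP : ∀ x, P x = ∏ g, k g x)
    (𝔱 : V) (hroot : ∀ g, ¬ E g 𝔱)
    (hfaithful : ∀ A B Z : Finset V,
      (∀ a ∈ A, a ∉ B ∧ a ∉ Z) → (∀ b ∈ B, b ∉ Z) →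
      CondIndepSets P A B Z → ∀ a ∈ A, ∀ b ∈ B, DSep E (↑Z) a b)
    (f : V) (hchild : E 𝔱 f) :
    ∃ W : Finset (S 𝔱),
      0 < (∑ y : ∀ v, S v, if y 𝔱 ∈ W then P y else 0) ∧
      ∀ (E' : V → V → Prop) (q : ∀ _ : V, (∀ v, S v) → ℝ≥0∞),
        (∀ v, ¬ Relation.TransGen E' v v) →
        (∀ g, ¬ E' g 𝔱 ∧ ¬ E' 𝔱 g) →
        (∀ (g : V) (x y : ∀ v, S v), g ≠ 𝔱 →
          (∀ h, E' h g → x h = y h) → x g = y g → q g x = q g y) →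
        (∀ (g : V) (x : ∀ v, S v), g ≠ 𝔱 →
          ∑ a : S g, q g (Function.update x g a) = 1) →
        -- `(G', q)` represents the window-conditional distribution:
        (∀ x : ∀ v, S v,
          (∏ g ∈ ({𝔱} : Finset V)ᶜ, q g x) =
            (∑ y : ∀ v, S v, if (∀ v, v ≠ 𝔱 → y v = x v) ∧ y 𝔱 ∈ W then P y else 0) /
            (∑ y : ∀ v, S v, if y 𝔱 ∈ W then P y else 0)) →
        -- kernels agree in structure for nodes other than children of `𝔱`:
        (∀ g, ¬ E 𝔱 g → g ≠ 𝔱 → q g = k g) →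
        q f ≠ k f := by
  classical
  have htf : 𝔱 ≠ f := by
    rintro rfl
    exact hacyclic 𝔱 (Relation.TransGen.single hchild)
  set Z : Finset V := Finset.univ.filter (fun g => E g f ∧ g ≠ 𝔱) with hZdef
  have h𝔱Z : 𝔱 ∉ Z := by simp [hZdef]
  have hfZ : f ∉ Z := by
    simp only [hZdef, Finset.mem_filter, Finset.mem_univ, true_and, not_and]
    intro hff
    exact absurd (Relation.TransGen.single hff) (hacyclic f)
  -- the direct edge is never d-separated
  have hnotdsep : ¬ DSep E (↑Z) 𝔱 f := by
    intro hD
    have hblocked := hD 1 (fun i => if i = 0 then 𝔱 else f) one_pos (by simp) (by simp)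
      (by
        intro i hi j hj hpij
        interval_cases i <;> interval_cases j <;> simp_all)
      (by
        intro i hi
        interval_cases i
        simpa using Or.inl hchild)
    obtain ⟨i, h0, h1, _⟩ := hblocked
    omega
  -- conditional independence of 𝔱 and f given Z, assuming k f does not depend on coord 𝔱
  have main : (∀ (y : ∀ v, S v) (t : S 𝔱), k f (Function.update y 𝔱 t) = k f y) →
      CondIndepSets P {𝔱} {f} Z := by
    intro hindep x
    set Df : Finset V := Finset.univ.filter (fun v => Relation.TransGen E f v) with hDf
    have hfDf : f ∉ Df := by simp [hDf, hacyclic f]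
    have h𝔱Df : 𝔱 ∉ Df := by
      simp only [hDf, Finset.mem_filter, Finset.mem_univ, true_and]
      intro h
      cases h with
      | single h => exact hroot f h
      | tail _ h => exact hroot _ h
    have hZDf : ∀ v ∈ Z, v ∉ Df := by
      intro v hv
      simp only [hDf, Finset.mem_filter, Finset.mem_univ, true_and]
      intro h
      have hvf : E v f := ((Finset.mem_filter.mp hv).2).1
      exact hacyclic f (h.tail hvf)
    have hDfclosed : ∀ v ∈ Df, ∀ w, E v w → w ∈ Df := by
      intro v hv w hvw
      simp only [hDf, Finset.mem_filter, Finset.mem_univ, true_and] at hv ⊢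
      exact hv.tail hvw
    set Dff : Finset V := insert f Df with hDff
    have hDffclosed : ∀ v ∈ Dff, ∀ w, E v w → w ∈ Dff := by
      intro v hv w hvw
      rcases Finset.mem_insert.mp hv with rfl | hv'
      · exact Finset.mem_insert_of_mem (by simp [hDf, Relation.TransGen.single hvw])
      · exact Finset.mem_insert_of_mem (hDfclosed v hv' w hvw)
    have h𝔱Dff : 𝔱 ∉ Dff := by
      simp only [hDff, Finset.mem_insert]
      rintro (rfl | h)
      · exact htf rfl
      · exact h𝔱Df h
    have hkey := key_lemma E hacyclic k hloc hnorm
    -- parents of f are in Z ∪ {𝔱}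
    have hpar : ∀ h, E h f → h = 𝔱 ∨ h ∈ Z := by
      intro h hh
      rcases eq_or_ne h 𝔱 with rfl | hh𝔱
      · exact Or.inl rfl
      · exact Or.inr (by simp [hZdef, hh, hh𝔱])
    -- Mg P U x = MgK k ∅ U x
    have hMg : ∀ U : Finset V, Mg P U x = MgK k ∅ U x := by
      intro U
      unfold Mg MgK
      refine Finset.sum_congr rfl fun y _ => ?_
      rw [hP y]
      congr 1
      rw [Finset.compl_empty]
    -- prod over Dfᶜ splits off k f
    have hsplitf : ∀ y : ∀ v, S v, (∏ g ∈ Dfᶜ, k g y) = k f y * ∏ g ∈ Dffᶜ, k g y := by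
      intro y
      have : Dffᶜ = Dfᶜ.erase f := by
        rw [hDff, Finset.compl_insert]
      rw [this, ← Finset.mul_prod_erase _ _ (Finset.mem_compl.mpr hfDf)]
    -- disjointness facts
    have hdisj1 : Disjoint Df ({𝔱} ∪ {f} ∪ Z) := by
      rw [Finset.disjoint_left]
      intro v hv
      simp only [Finset.mem_union, Finset.mem_singleton]
      rintro ((rfl | rfl) | hvZ)
      · exact h𝔱Df hv
      · exact hfDf hv
      · exact hZDf v hvZ hv
    have hdisj2 : Disjoint Dff ({𝔱} ∪ Z) := by
      rw [Finset.disjoint_left]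
      intro v hv
      simp only [Finset.mem_union, Finset.mem_singleton]
      rintro (rfl | hvZ)
      · exact h𝔱Dff hv
      · rcases Finset.mem_insert.mp hv with rfl | hv'
        · exact hfZ hvZ
        · exact hZDf v hvZ hv'
    have hdisj3 : Disjoint Df ({f} ∪ Z) :=
      Finset.disjoint_of_subset_right (by
        intro v hv
        simp only [Finset.mem_union, Finset.mem_singleton] at hv ⊢
        tauto) hdisj1
    have hdisj4 : Disjoint Dff Z :=
      Finset.disjoint_of_subset_right (Finset.subset_union_right) hdisj2
    -- define G and H
    set G : ℝ≥0∞ := MgK k Dff (({𝔱} ∪ Z) ∪ Dff) x with hG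
    set H : ℝ≥0∞ := MgK k Dff (Z ∪ Dff) x with hH
    -- M₂
    have e2 : Mg P ({𝔱} ∪ Z) x = G := by
      rw [hMg]; exact hkey Dff hDffclosed ({𝔱} ∪ Z) hdisj2 x
    -- M₄
    have e4 : Mg P Z x = H := by
      rw [hMg]; exact hkey Dff hDffclosed Z hdisj4 x
    -- M₁
    have e1 : Mg P ({𝔱} ∪ {f} ∪ Z) x = k f x * G := by
      rw [hMg, hkey Df hDfclosed ({𝔱} ∪ {f} ∪ Z) hdisj1 x]
      have hU : (({𝔱} ∪ {f} ∪ Z) ∪ Df) = (({𝔱} ∪ Z) ∪ Dff) := by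
        ext v
        simp only [Finset.mem_union, Finset.mem_singleton, hDff, Finset.mem_insert]
        tauto
      unfold MgK
      calc (∑ y : ∀ v, S v, if ∀ v ∈ ({𝔱} ∪ {f} ∪ Z) ∪ Df, y v = x v
              then ∏ g ∈ Dfᶜ, k g y else 0)
          = ∑ y : ∀ v, S v, if ∀ v ∈ ({𝔱} ∪ {f} ∪ Z) ∪ Df, y v = x v
              then k f y * ∏ g ∈ Dffᶜ, k g y else 0 :=
            Finset.sum_congr rfl fun y _ => by rw [hsplitf y]
        _ = k f x * ∑ y : ∀ v, S v, if ∀ v ∈ ({𝔱} ∪ {f} ∪ Z) ∪ Df, y v = x v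
              then ∏ g ∈ Dffᶜ, k g y else 0 := by
            refine pull_const fun y hy => ?_
            refine hloc f y x (fun h hh => ?_) ?_
            · rcases hpar h hh with rfl | hhZ
              · exact hy h (by simp)
              · exact hy h (by simp [Finset.mem_union, hhZ])
            · exact hy f (by simp)
        _ = k f x * G := by rw [hU]; rfl
    -- M₃
    have e3 : Mg P ({f} ∪ Z) x = k f x * H := by
      rw [hMg, hkey Df hDfclosed ({f} ∪ Z) hdisj3 x]
      have hU : (({f} ∪ Z) ∪ Df) = (Z ∪ Dff) := by
        ext v
        simp only [Finset.mem_union, Finset.mem_singleton, hDff, Finset.mem_insert]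
        tauto
      unfold MgK
      calc (∑ y : ∀ v, S v, if ∀ v ∈ ({f} ∪ Z) ∪ Df, y v = x v
              then ∏ g ∈ Dfᶜ, k g y else 0)
          = ∑ y : ∀ v, S v, if ∀ v ∈ ({f} ∪ Z) ∪ Df, y v = x v
              then k f y * ∏ g ∈ Dffᶜ, k g y else 0 :=
            Finset.sum_congr rfl fun y _ => by rw [hsplitf y]
        _ = k f x * ∑ y : ∀ v, S v, if ∀ v ∈ ({f} ∪ Z) ∪ Df, y v = x v
              then ∏ g ∈ Dffᶜ, k g y else 0 := by
            refine pull_const fun y hy => ?_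
            have h1 : k f y = k f (Function.update y 𝔱 (x 𝔱)) := (hindep y (x 𝔱)).symm
            rw [h1]
            refine hloc f _ x (fun h hh => ?_) ?_
            · rcases hpar h hh with rfl | hhZ
              · rw [Function.update_self]
              · have hh𝔱 : h ≠ 𝔱 := fun he => h𝔱Z (he ▸ hhZ)
                rw [Function.update_of_ne hh𝔱]
                exact hy h (by simp [Finset.mem_union, hhZ])
            · rw [Function.update_of_ne (fun he => htf he.symm)]
              exact hy f (by simp)
        _ = k f x * H := by rw [hU]; rfl
    unfold CondIndepSets at *
    rw [e1, e2, e3, e4]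
    ring
  -- side conditions for faithfulness
  have hside1 : ∀ a ∈ ({𝔱} : Finset V), a ∉ ({f} : Finset V) ∧ a ∉ Z := by
    intro a ha
    rw [Finset.mem_singleton] at ha
    subst ha
    exact ⟨by simp [htf], h𝔱Z⟩
  have hside2 : ∀ b ∈ ({f} : Finset V), b ∉ Z := by
    intro b hb
    rw [Finset.mem_singleton] at hb
    subst hb
    exact hfZ
  by_cases hpos : 0 < (∑ y : ∀ v, S v, if y 𝔱 ∈ (Finset.univ : Finset (S 𝔱)) then P y else 0)
  · refine ⟨Finset.univ, hpos, ?_⟩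
    intro E' q _ hq2 hqloc _ _ _ hqf
    have hindep : ∀ (y : ∀ v, S v) (t : S 𝔱), k f (Function.update y 𝔱 t) = k f y := by
      intro y t
      rw [← hqf]
      refine hqloc f _ _ (fun he => htf he.symm) (fun h hh => ?_) ?_
      · have hh𝔱 : h ≠ 𝔱 := by
          rintro rfl
          exact (hq2 f).2 hh
        rw [Function.update_of_ne hh𝔱]
      · rw [Function.update_of_ne (fun he => htf he.symm)]
    exact hnotdsep (hfaithful {𝔱} {f} Z hside1 hside2 (main hindep) 𝔱 (Finset.mem_singleton_self 𝔱)
      f (Finset.mem_singleton_self f))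
  · exfalso
    have hzero : ∀ y : ∀ v, S v, P y = 0 := by
      have h0 : (∑ y : ∀ v, S v, if y 𝔱 ∈ (Finset.univ : Finset (S 𝔱)) then P y else 0) = 0 := by
        by_contra h
        exact hpos (pos_iff_ne_zero.mpr h)
      simp only [Finset.mem_univ, if_true] at h0
      intro y
      exact (Finset.sum_eq_zero_iff.mp h0) y (Finset.mem_univ y)
    have hci : CondIndepSets P {𝔱} {f} Z := by
      intro x
      have : ∀ U : Finset V, Mg P U x = 0 := by
        intro U
        unfold Mg
        refine Finset.sum_eq_zero fun y _ => ?_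
        simp [hzero y]
      rw [this, this, this, this]
    exact hnotdsep (hfaithful {𝔱} {f} Z hside1 hside2 hci 𝔱 (Finset.mem_singleton_self 𝔱)
      f (Finset.mem_singleton_self f))
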